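/- arXiv:2103.07232 — 2 statements merged into one kernel-verified Lean document; each statement's English description precedes it below -/
import Mathlib

section
/- For every α > 0, if v₍α₎ ∈ C²(closure(Ω)) is the nonnegative solution of Δv = α v e^v in Ω with v = v⋆ on ∂Ω, and v' ∈ C²(closure(Ω)) solves Δv' = v₍α₎ + (α e^{v₍α₎} + α v₍α₎ e^{v₍α₎}) v' in Ω with v' = 0 on ∂Ω, and v' ≤ 0 in Ω, then v' > −1/α in Ω. -/
open MeasureTheory

/-- First partial derivative in direction `i`. -/
noncomputable def pd {n : ℕ} (i : Fin n) (f : EuclideanSpace ℝ (Fin n) → ℝ)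
    (x : EuclideanSpace ℝ (Fin n)) : ℝ :=
  fderiv ℝ f x (EuclideanSpace.single i 1)

/-- Laplacian. -/
noncomputable def lap {n : ℕ} (f : EuclideanSpace ℝ (Fin n) → ℝ)
    (x : EuclideanSpace ℝ (Fin n)) : ℝ :=
  ∑ i, pd i (pd i f) x

lemma pd_contDiff {n : ℕ} (i : Fin n) {f : EuclideanSpace ℝ (Fin n) → ℝ}
    (hf : ContDiff ℝ 2 f) : ContDiff ℝ 1 (pd i f) := by
  have h1 : ContDiff ℝ 1 (fun x => fderiv ℝ f x) := hf.fderiv_right (by norm_num)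
  exact (ContinuousLinearMap.apply ℝ ℝ (EuclideanSpace.single i 1)).contDiff.comp h1

lemma secondDeriv_nonneg {g : ℝ → ℝ} (hg : Differentiable ℝ g)
    (hg' : DifferentiableAt ℝ (deriv g) 0) (hmin : IsLocalMin g 0) :
    0 ≤ deriv (deriv g) 0 := by
  by_contra h
  push_neg at h
  have h0 : deriv g 0 = 0 := hmin.deriv_eq_zero
  have ht := hg'.hasDerivAt
  rw [hasDerivAt_iff_tendsto_slope] at ht
  have hev : ∀ᶠ t in nhdsWithin (0:ℝ) {(0:ℝ)}ᶜ, slope (deriv g) 0 t < 0 :=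
    ht.eventually_lt_const h
  rw [eventually_nhdsWithin_iff] at hev
  have hmin' : ∀ᶠ t in nhds (0:ℝ), g 0 ≤ g t := hmin
  rcases Metric.eventually_nhds_iff.mp (hev.and hmin') with ⟨δ, hδ, hδp⟩
  set c : ℝ := δ / 2 with hc
  have hcpos : 0 < c := by positivity
  have hanti : StrictAntiOn g (Set.Icc 0 c) := by
    apply strictAntiOn_of_deriv_neg (convex_Icc 0 c) (hg.continuous.continuousOn)
    intro x hx
    rw [interior_Icc] at hx
    have hxd : dist x 0 < δ := by
      rw [Real.dist_eq, sub_zero, abs_of_pos hx.1]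
      linarith [hx.2]
    have hs := (hδp hxd).1 (by simp [ne_of_gt hx.1])
    rw [slope_def_field, h0, sub_zero, sub_zero] at hs
    rcases div_neg_iff.mp hs with ⟨_, h2⟩ | ⟨h1, _⟩
    · linarith [hx.1]
    · exact h1
  have h1 : g c < g 0 := hanti (Set.left_mem_Icc.mpr hcpos.le) (Set.right_mem_Icc.mpr hcpos.le) hcpos
  have h2 : g 0 ≤ g c := (hδp (show dist c 0 < δ by rw [Real.dist_eq, sub_zero, abs_of_pos hcpos]; linarith)).2
  linarith

lemma pd_pd_nonneg {n : ℕ} {f : EuclideanSpace ℝ (Fin n) → ℝ} (hf : ContDiff ℝ 2 f)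
    {x₀ : EuclideanSpace ℝ (Fin n)} (hmin : IsLocalMin f x₀) (i : Fin n) :
    0 ≤ pd i (pd i f) x₀ := by
  set e : EuclideanSpace ℝ (Fin n) := EuclideanSpace.single i (1:ℝ) with he
  set L : ℝ → EuclideanSpace ℝ (Fin n) := fun t => x₀ + t • e with hL
  have hL0 : L 0 = x₀ := by simp [hL]
  have hLd : ∀ t : ℝ, HasDerivAt L e t := fun t => by
    have h := ((hasDerivAt_id t).smul_const e).const_add x₀
    rw [one_smul] at h
    exact h
  set g : ℝ → ℝ := fun t => f (L t) with hg
  have hgmin : IsLocalMin g 0 := by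
    have hc : Filter.Tendsto L (nhds 0) (nhds x₀) := by
      simpa [hL0] using (hLd 0).continuousAt.tendsto
    have := hc.eventually hmin
    simpa [IsLocalMin, IsMinFilter, hg, hL0] using this
  have hdg : ∀ t : ℝ, HasDerivAt g (pd i f (L t)) t := fun t =>
    ((hf.differentiable (by norm_num) (L t)).hasFDerivAt).comp_hasDerivAt t (hLd t)
  have hdgeq : deriv g = fun t => pd i f (L t) := funext fun t => (hdg t).deriv
  have hpdC : ContDiff ℝ 1 (pd i f) := pd_contDiff i hf
  have hdd : HasDerivAt (fun t => pd i f (L t)) (pd i (pd i f) x₀) 0 := by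
    have h := ((hpdC.differentiable (by norm_num) (L 0)).hasFDerivAt).comp_hasDerivAt 0 (hLd 0)
    rw [hL0] at h
    exact h
  have hkey : deriv (deriv g) 0 = pd i (pd i f) x₀ := by
    rw [hdgeq]; exact hdd.deriv
  rw [← hkey]
  exact secondDeriv_nonneg (fun t => (hdg t).differentiableAt)
    (by rw [hdgeq]; exact hdd.differentiableAt) hgmin

/-- with `v = v_α ≥ 0` solving `Δv = α v e^v` in `Ω` (boundary datum `v⋆`), if
`v'` solves the linearized problem `Δv' = v + (α e^v + α v e^v) v'` in `Ω`, `v' = 0` on `∂Ω`,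
and `v' ≤ 0` in `Ω`, then `v' > −1/α` in `Ω`. -/
theorem stmt14 (n : ℕ) (Ω : Set (EuclideanSpace ℝ (Fin n)))
    (hΩo : IsOpen Ω) (hΩb : Bornology.IsBounded Ω) (hΩc : IsConnected Ω)
    (α : ℝ) (hα : 0 < α)
    (vstar : EuclideanSpace ℝ (Fin n) → ℝ)
    (hvstarnn : ∀ x ∈ frontier Ω, 0 ≤ vstar x)
    (v : EuclideanSpace ℝ (Fin n) → ℝ) (hv : ContDiff ℝ 2 v)
    (hvnn : ∀ x ∈ closure Ω, 0 ≤ v x)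
    (hpde : ∀ x ∈ Ω, lap v x = α * v x * Real.exp (v x))
    (hbc : ∀ x ∈ frontier Ω, v x = vstar x)
    (v' : EuclideanSpace ℝ (Fin n) → ℝ) (hv' : ContDiff ℝ 2 v')
    (hpde' : ∀ x ∈ Ω, lap v' x
      = v x + (α * Real.exp (v x) + α * v x * Real.exp (v x)) * v' x)
    (hbc' : ∀ x ∈ frontier Ω, v' x = 0)
    (hnp : ∀ x ∈ Ω, v' x ≤ 0) :
    ∀ x ∈ Ω, v' x > -(1 / α) := by
  intro x hx
  have hne : (closure Ω).Nonempty := ⟨x, subset_closure hx⟩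
  have hcomp : IsCompact (closure Ω) := hΩb.isCompact_closure
  obtain ⟨x₀, hx₀, hminon⟩ := hcomp.exists_isMinOn hne hv'.continuous.continuousOn
  suffices h : -(1/α) < v' x₀ from lt_of_lt_of_le h (hminon (subset_closure hx))
  by_cases hcase : x₀ ∈ Ω
  · have hloc : IsLocalMin v' x₀ := by
      have hnb : Ω ∈ nhds x₀ := hΩo.mem_nhds hcase
      filter_upwards [hnb] with y hy using hminon (subset_closure hy)
    have hlap : 0 ≤ lap v' x₀ := Finset.sum_nonneg fun i _ => pd_pd_nonneg hv' hloc i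
    rw [hpde' x₀ hcase] at hlap
    have h1 : 0 ≤ v x₀ := hvnn x₀ (subset_closure hcase)
    have h2 : v x₀ + 1 ≤ Real.exp (v x₀) := by linarith [Real.add_one_le_exp (v x₀)]
    have h3 : v' x₀ ≤ 0 := hnp x₀ hcase
    have hexp : 0 < Real.exp (v x₀) := Real.exp_pos _
    by_contra hcon
    push_neg at hcon
    have hαW : α * v' x₀ ≤ -1 := by
      have := mul_le_mul_of_nonneg_left hcon hα.le
      have heq : α * (-(1/α)) = -1 := by field_simp
      linarith
    have hEV : (0:ℝ) ≤ Real.exp (v x₀) * (1 + v x₀) := by positivity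
    have h4 := mul_le_mul_of_nonneg_right hαW hEV
    have h5 : 0 ≤ Real.exp (v x₀) * v x₀ := by positivity
    nlinarith [h4, h5, hlap, h1, h2]
  · have hfr : x₀ ∈ frontier Ω := by
      rw [frontier, hΩo.interior_eq]
      exact ⟨hx₀, hcase⟩
    rw [hbc' x₀ hfr]
    exact neg_lt_zero.mpr (by positivity)
end

section
/- Let v : closure(B_R(0)) → ℝ be a radially symmetric C² solution of Δv = α v e^v on the ball B_R(0) ⊂ ℝⁿ with v ≥ 0, α ≥ 0, and radial derivative vanishing at the origin. Then the radial profile of v is convex on [0,R]; consequently u := α e^v is also convex along radii. -/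
open MeasureTheory

section Aux

variable {n : ℕ} {f : ℝ → ℝ}

noncomputable def G (f : ℝ → ℝ) (s : ℝ) : ℝ :=
  deriv f (Real.sqrt s) * (2 * Real.sqrt s)⁻¹

lemma hasDerivAt_G (hf : ContDiff ℝ 2 f) {s : ℝ} (hs : 0 < s) :
    HasDerivAt (G f)
      ((deriv (deriv f) (Real.sqrt s) * (1 / (2 * Real.sqrt s))) * (2 * Real.sqrt s)⁻¹
        + deriv f (Real.sqrt s) * (-(2 * (1 / (2 * Real.sqrt s))) / (2 * Real.sqrt s)^2)) s := by
  have hd1 : ContDiff ℝ 1 (deriv f) := by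
    have h2 : ContDiff ℝ ((1:ℕ∞)+1) f := by exact_mod_cast hf
    exact (contDiff_succ_iff_deriv.mp h2).2.2
  have hs' : Real.sqrt s ≠ 0 := (Real.sqrt_pos.mpr hs).ne'
  have h1 : HasDerivAt (fun t => deriv f (Real.sqrt t))
      (deriv (deriv f) (Real.sqrt s) * (1 / (2 * Real.sqrt s))) s :=
    ((hd1.differentiable one_ne_zero _).hasDerivAt).comp s (Real.hasDerivAt_sqrt hs.ne')
  have h2 : HasDerivAt (fun t => (2 * Real.sqrt t)⁻¹)
      (-(2 * (1 / (2 * Real.sqrt s))) / (2 * Real.sqrt s)^2) s :=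
    ((Real.hasDerivAt_sqrt hs.ne').const_mul 2).inv (by positivity)
  exact h1.mul h2

lemma hasFDerivAt_radial (hf : ContDiff ℝ 2 f) {y : EuclideanSpace ℝ (Fin n)} (hy : y ≠ 0) :
    HasFDerivAt (fun y : EuclideanSpace ℝ (Fin n) => f ‖y‖)
      (G f (‖y‖^2) • (2 • (innerSL ℝ y))) y := by
  have hnorm : (0:ℝ) < ‖y‖^2 := by
    have := norm_pos_iff.mpr hy
    positivity
  have hq : HasFDerivAt (fun y : EuclideanSpace ℝ (Fin n) => ‖y‖^2)
      (2 • (innerSL ℝ y)) y := (hasStrictFDerivAt_norm_sq y).hasFDerivAt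
  have hF : HasDerivAt (fun s => f (Real.sqrt s)) (G f (‖y‖^2)) (‖y‖^2) := by
    have := ((hf.differentiable (by norm_num) _).hasDerivAt).comp (‖y‖^2)
      (Real.hasDerivAt_sqrt hnorm.ne')
    simpa [G, div_eq_mul_inv, one_div, mul_comm, mul_assoc, mul_left_comm, Function.comp_def] using this
  have hfun : (fun y : EuclideanSpace ℝ (Fin n) => f ‖y‖)
      = (fun s => f (Real.sqrt s)) ∘ (fun y : EuclideanSpace ℝ (Fin n) => ‖y‖^2) := by
    funext z; simp [Function.comp, Real.sqrt_sq (norm_nonneg z)]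
  rw [hfun]
  exact hF.comp_hasFDerivAt y hq

noncomputable def G' (f : ℝ → ℝ) (s : ℝ) : ℝ :=
  (deriv (deriv f) (Real.sqrt s) * (1 / (2 * Real.sqrt s))) * (2 * Real.sqrt s)⁻¹
    + deriv f (Real.sqrt s) * (-(2 * (1 / (2 * Real.sqrt s))) / (2 * Real.sqrt s)^2)

lemma pd_radial_eq (hf : ContDiff ℝ 2 f) (i : Fin n) {y : EuclideanSpace ℝ (Fin n)}
    (hy : y ≠ 0) :
    pd i (fun y : EuclideanSpace ℝ (Fin n) => f ‖y‖) y = G f (‖y‖^2) * (2 * y i) := by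
  rw [pd, (hasFDerivAt_radial hf hy).fderiv]
  simp [EuclideanSpace.inner_single_right, real_inner_comm]

lemma pd_pd_radial_eq (hf : ContDiff ℝ 2 f) (i : Fin n) {x : EuclideanSpace ℝ (Fin n)}
    (hx : x ≠ 0) :
    pd i (pd i (fun y : EuclideanSpace ℝ (Fin n) => f ‖y‖)) x
      = G f (‖x‖^2) * 2 + (2 * x i) * (G' f (‖x‖^2) * (2 * x i)) := by
  have hx2 : (0:ℝ) < ‖x‖^2 := by
    have := norm_pos_iff.mpr hx
    positivity
  have hq : HasFDerivAt (fun y : EuclideanSpace ℝ (Fin n) => ‖y‖^2)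
      (2 • (innerSL ℝ x)) x := (hasStrictFDerivAt_norm_sq x).hasFDerivAt
  have h₁ : HasFDerivAt (fun y : EuclideanSpace ℝ (Fin n) => G f (‖y‖^2))
      (G' f (‖x‖^2) • (2 • (innerSL ℝ x))) x :=
    by have := (hasDerivAt_G hf hx2).comp_hasFDerivAt x hq; exact this
  have h₂ : HasFDerivAt (fun y : EuclideanSpace ℝ (Fin n) => (2:ℝ) * y i)
      ((2:ℝ) • (EuclideanSpace.proj i : EuclideanSpace ℝ (Fin n) →L[ℝ] ℝ)) x := by
    exact ((EuclideanSpace.proj (𝕜 := ℝ) i).hasFDerivAt).const_mul (2:ℝ)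
  have hmul := h₁.mul h₂
  have hEq : pd i (fun y : EuclideanSpace ℝ (Fin n) => f ‖y‖)
      =ᶠ[nhds x] (fun y => G f (‖y‖^2) * (2 * y i)) := by
    filter_upwards [isOpen_ne.mem_nhds hx] with z hz
    exact pd_radial_eq hf i hz
  rw [pd, hEq.fderiv_eq, (show HasFDerivAt (fun y : EuclideanSpace ℝ (Fin n) => G f (‖y‖^2) * (2 * y i)) _ x from hmul).fderiv]
  simp [EuclideanSpace.inner_single_right, real_inner_comm, EuclideanSpace.single_apply]

lemma lap_radial (hn : 1 ≤ n) (hf : ContDiff ℝ 2 f) {r : ℝ} (hr : 0 < r) :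
    lap (fun y : EuclideanSpace ℝ (Fin n) => f ‖y‖)
        (r • EuclideanSpace.single (⟨0, hn⟩ : Fin n) 1)
      = deriv (deriv f) r + ((n:ℝ) - 1)/r * deriv f r := by
  set x : EuclideanSpace ℝ (Fin n) := r • EuclideanSpace.single (⟨0, hn⟩ : Fin n) 1 with hxdef
  have hxn : ‖x‖ = r := by
    rw [hxdef, norm_smul, EuclideanSpace.norm_single]
    simp [abs_of_pos hr]
  have hx0 : x ≠ 0 := by
    intro h; rw [h, norm_zero] at hxn; exact hr.ne hxn
  have hsum : ∑ i, (x i)^2 = r^2 := by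
    rw [show ∑ i, (x i)^2 = ‖x‖^2 by
      rw [EuclideanSpace.norm_eq, Real.sq_sqrt (by positivity)]
      simp [Real.norm_eq_abs, sq_abs], hxn]
  have hlap : lap (fun y : EuclideanSpace ℝ (Fin n) => f ‖y‖) x
      = ∑ i, (G f (‖x‖^2) * 2 + (2 * x i) * (G' f (‖x‖^2) * (2 * x i))) := by
    exact Finset.sum_congr rfl fun i _ => pd_pd_radial_eq hf i hx0
  rw [hlap, hxn]
  have hsplit : ∑ i, (G f (r^2) * 2 + (2 * x i) * (G' f (r^2) * (2 * x i)))
      = (n:ℝ) * (G f (r^2) * 2) + 4 * G' f (r^2) * r^2 := by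
    rw [Finset.sum_add_distrib, Finset.sum_const, Finset.card_univ, Fintype.card_fin]
    have hterm : ∑ i, (2 * x i) * (G' f (r^2) * (2 * x i)) = 4 * G' f (r^2) * ∑ i, (x i)^2 := by
      rw [Finset.mul_sum]; exact Finset.sum_congr rfl fun i _ => by ring
    rw [hterm, hsum]; push_cast; ring
  rw [hsplit]
  have hsq : Real.sqrt (r^2) = r := Real.sqrt_sq hr.le
  rw [G, G', hsq]
  field_simp
  ring

end Aux

theorem stmt18_ode (n : ℕ) (hn : 1 ≤ n) (R : ℝ) (hR : 0 < R) (α : ℝ) (hα : 0 ≤ α)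
    (f : ℝ → ℝ) (hf : ContDiff ℝ 2 f) (hf0 : deriv f 0 = 0)
    (hfnn : ∀ r ∈ Set.Icc (0:ℝ) R, 0 ≤ f r)
    (hODE : ∀ r ∈ Set.Ioo (0:ℝ) R,
      deriv (deriv f) r + ((n:ℝ) - 1)/r * deriv f r = α * f r * Real.exp (f r)) :
    ConvexOn ℝ (Set.Icc 0 R) f ∧
    ConvexOn ℝ (Set.Icc 0 R) (fun r => α * Real.exp (f r)) := by
  obtain ⟨m, rfl⟩ : ∃ m, n = m + 1 := ⟨n - 1, (Nat.succ_pred_eq_of_pos hn).symm⟩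
  set g : ℝ → ℝ := fun r => α * f r * Real.exp (f r) with hg
  have hgc : Continuous g := by
    exact (continuous_const.mul (hf.continuous)).mul (Real.continuous_exp.comp hf.continuous)
  have hd1 : Differentiable ℝ f := hf.differentiable two_ne_zero
  have hd1' : ContDiff ℝ 1 (deriv f) := by
    have h2 : ContDiff ℝ ((1:ℕ∞)+1) f := by exact_mod_cast hf
    exact (contDiff_succ_iff_deriv.mp h2).2.2
  have hd1c : Continuous (deriv f) := hd1'.continuous
  have hd2 : Differentiable ℝ (deriv f) := hd1'.differentiable one_ne_zero
  have hg0 : ∀ s ∈ Set.Icc (0:ℝ) R, 0 ≤ g s := fun s hs => by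
    have := hfnn s hs
    positivity
  -- the function h r = r^m * f'(r)
  set h : ℝ → ℝ := fun r => r ^ m * deriv f r with hh
  have hhc : Continuous h := (continuous_pow m).mul hd1c
  have hh0 : h 0 = 0 := by simp [hh, hf0]
  have hODE' : ∀ r ∈ Set.Ioo (0:ℝ) R,
      deriv (deriv f) r = g r - (m:ℝ)/r * deriv f r := by
    intro r hr
    have hOr := hODE r hr
    push_cast at hOr
    have e2 : ((m:ℝ) + 1 - 1)/r = (m:ℝ)/r := by ring
    rw [e2] at hOr
    rw [hg]
    linarith
  have hder : ∀ r ∈ Set.Ioo (0:ℝ) R, HasDerivAt h (r ^ m * g r) r := by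
    intro r hr
    have hr0 : r ≠ 0 := hr.1.ne'
    have h1 : HasDerivAt h ((m:ℝ) * r ^ (m-1) * deriv f r + r ^ m * deriv (deriv f) r) r :=
      (hasDerivAt_pow m r).mul (hd2 r).hasDerivAt
    rw [hODE' r hr] at h1
    have h3 : (m:ℝ) * r ^ (m-1) * deriv f r + r ^ m * (g r - (m:ℝ)/r * deriv f r)
        = r ^ m * g r := by
      have hkey : (m:ℝ) * r ^ (m-1) = r ^ m * ((m:ℝ)/r) := by
        cases m with
        | zero => simp
        | succ k =>
          rw [Nat.add_sub_cancel, pow_succ]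
          field_simp
      rw [mul_sub]
      rw [show r ^ m * ((m:ℝ)/r * deriv f r) = (r ^ m * ((m:ℝ)/r)) * deriv f r by ring, ← hkey]
      ring
    rwa [h3] at h1
  -- FTC: h r = ∫ s in 0..r, s^m * g s
  have hFTC : ∀ r ∈ Set.Icc (0:ℝ) R, h r = ∫ s in (0:ℝ)..r, s ^ m * g s := by
    intro r hr
    have := intervalIntegral.integral_eq_sub_of_hasDeriv_right_of_le hr.1
      (hhc.continuousOn) (f' := fun s => s ^ m * g s)
      (fun x hx => ((hder x ⟨hx.1, lt_of_lt_of_le hx.2 hr.2⟩).hasDerivWithinAt))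
      (((continuous_pow m).mul hgc).intervalIntegrable 0 r)
    rw [this, hh0, sub_zero]
  -- f' ≥ 0 on [0,R]
  have hd1nn : ∀ r ∈ Set.Icc (0:ℝ) R, 0 ≤ deriv f r := by
    intro r hr
    rcases eq_or_lt_of_le hr.1 with h0 | h0
    · rw [← h0, hf0]
    · have hint : 0 ≤ ∫ s in (0:ℝ)..r, s ^ m * g s := by
        apply intervalIntegral.integral_nonneg hr.1
        intro s hs
        exact mul_nonneg (pow_nonneg hs.1 m) (hg0 s ⟨hs.1, le_trans hs.2 hr.2⟩)
      have hfr := hFTC r hr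
      rw [← hfr] at hint
      simp only [hh] at hint
      have hpos : (0:ℝ) < r ^ m := pow_pos h0 m
      nlinarith [hint, hpos]
  -- f monotone on [0,R]
  have hfmono : MonotoneOn f (Set.Icc 0 R) :=
    monotoneOn_of_deriv_nonneg (convex_Icc 0 R) hf.continuous.continuousOn
      hd1.differentiableOn
      (fun x hx => hd1nn x (by rw [interior_Icc] at hx; exact ⟨hx.1.le, hx.2.le⟩))
  -- g monotone bound and f' upper bound
  have hd2nn : ∀ r ∈ Set.Ioo (0:ℝ) R, 0 ≤ deriv (deriv f) r := by
    intro r hr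
    have hrI : r ∈ Set.Icc (0:ℝ) R := ⟨hr.1.le, hr.2.le⟩
    have hbound : deriv f r ≤ r * g r / (m + 1) := by
      have hle : (∫ s in (0:ℝ)..r, s ^ m * g s) ≤ ∫ s in (0:ℝ)..r, s ^ m * g r := by
        apply intervalIntegral.integral_mono_on hr.1.le
          (((continuous_pow m).mul hgc).intervalIntegrable 0 r)
          (((continuous_pow m).mul continuous_const).intervalIntegrable 0 r)
        intro s hs
        have hsI : s ∈ Set.Icc (0:ℝ) R := ⟨hs.1, le_trans hs.2 hr.2.le⟩
        have hfle : f s ≤ f r := hfmono hsI hrI (le_trans hs.2 le_rfl)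
        have h1 : g s ≤ g r := by
          have hfs := hfnn s hsI
          have hee := Real.exp_le_exp.mpr hfle
          have hexp : 0 < Real.exp (f s) := Real.exp_pos _
          have hmm : α * f s ≤ α * f r := mul_le_mul_of_nonneg_left hfle hα
          show α * f s * Real.exp (f s) ≤ α * f r * Real.exp (f r)
          calc α * f s * Real.exp (f s) ≤ α * f r * Real.exp (f s) :=
                mul_le_mul_of_nonneg_right hmm hexp.le
            _ ≤ α * f r * Real.exp (f r) := by
                apply mul_le_mul_of_nonneg_left hee
                have := hfnn r hrI
                positivity
        exact mul_le_mul_of_nonneg_left h1 (pow_nonneg hs.1 m)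
      have hval : (∫ s in (0:ℝ)..r, s ^ m * g r) = g r * (r ^ (m+1) / (m+1)) := by
        rw [intervalIntegral.integral_mul_const, integral_pow]
        push_cast
        ring
      have hFr := hFTC r hrI
      have hpow : (0:ℝ) < r ^ m := pow_pos hr.1 m
      have hh_le : r ^ m * deriv f r ≤ g r * (r ^ (m+1) / (m+1)) := by
        have hFr' : r ^ m * deriv f r = ∫ s in (0:ℝ)..r, s ^ m * g s := by
          simpa only [hh] using hFr
        rw [hFr', ← hval]; exact hle
      have hrpow : r ^ (m+1) = r ^ m * r := pow_succ r m
      rw [hrpow] at hh_le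
      have h2 : g r * (r ^ m * r / ((m:ℝ)+1)) = r ^ m * (r * g r / ((m:ℝ)+1)) := by ring
      rw [h2] at hh_le
      exact le_of_mul_le_mul_left hh_le hpow
    rw [hODE' r hr]
    have hgr : 0 ≤ g r := hg0 r hrI
    have hstep : (m:ℝ)/r * deriv f r ≤ (m:ℝ)/r * (r * g r / (m+1)) := by
      exact mul_le_mul_of_nonneg_left hbound (div_nonneg (Nat.cast_nonneg m) hr.1.le)
    have hr0 : r ≠ 0 := hr.1.ne'
    have hcancel : (m:ℝ)/r * (r * g r / ((m:ℝ)+1)) = (m:ℝ) * g r / ((m:ℝ)+1) * (r / r) := by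
      ring
    rw [div_self hr0, mul_one] at hcancel
    rw [hcancel] at hstep
    have hfin : (m:ℝ) * g r / (m+1) ≤ g r := by
      rw [div_le_iff₀ (by positivity : (0:ℝ) < (m:ℝ)+1)]
      nlinarith
    linarith
  -- convexity of f
  have conv1 : ConvexOn ℝ (Set.Icc 0 R) f := by
    apply convexOn_of_deriv2_nonneg (convex_Icc 0 R) hf.continuous.continuousOn
      hd1.differentiableOn hd2.differentiableOn
    intro x hx
    rw [interior_Icc] at hx
    simpa [Function.iterate_succ, Function.comp] using hd2nn x hx
  refine ⟨conv1, ⟨convex_Icc 0 R, fun x hx y hy a b ha hb hab => ?_⟩⟩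
  have h1 : f (a • x + b • y) ≤ a * f x + b * f y := conv1.2 hx hy ha hb hab
  have h2 : Real.exp (a * f x + b * f y) ≤ a * Real.exp (f x) + b * Real.exp (f y) := by
    simpa [smul_eq_mul] using convexOn_exp.2 (Set.mem_univ (f x)) (Set.mem_univ (f y)) ha hb hab
  calc α * Real.exp (f (a • x + b • y))
      ≤ α * Real.exp (a * f x + b * f y) :=
        mul_le_mul_of_nonneg_left (Real.exp_le_exp.mpr h1) hα
    _ ≤ α * (a * Real.exp (f x) + b * Real.exp (f y)) := mul_le_mul_of_nonneg_left h2 hα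
    _ = a • (α * Real.exp (f x)) + b • (α * Real.exp (f y)) := by
        simp [smul_eq_mul]; ring


/-- a radially symmetric, nonnegative `C²` solution `v(x) = f(‖x‖)` of
`Δv = α v e^v` on the ball `B_R(0)` with `f'(0) = 0` has a convex radial profile `f` on
`[0,R]`; consequently the radial profile of `u = α e^v` is convex as well. -/
theorem stmt18 (n : ℕ) (hn : 1 ≤ n) (R : ℝ) (hR : 0 < R) (α : ℝ) (hα : 0 ≤ α)
    (f : ℝ → ℝ) (hf : ContDiff ℝ 2 f) (hf0 : deriv f 0 = 0)
    (hfnn : ∀ r ∈ Set.Icc (0:ℝ) R, 0 ≤ f r)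
    (hpde : ∀ x ∈ Metric.ball (0 : EuclideanSpace ℝ (Fin n)) R,
      lap (fun y : EuclideanSpace ℝ (Fin n) => f ‖y‖) x
        = α * f ‖x‖ * Real.exp (f ‖x‖)) :
    ConvexOn ℝ (Set.Icc 0 R) f ∧
    ConvexOn ℝ (Set.Icc 0 R) (fun r => α * Real.exp (f r)) := by
  apply stmt18_ode n hn R hR α hα f hf hf0 hfnn
  intro r hr
  set x : EuclideanSpace ℝ (Fin n) := r • EuclideanSpace.single (⟨0, hn⟩ : Fin n) 1 with hxdef
  have hxn : ‖x‖ = r := by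
    rw [hxdef, norm_smul, EuclideanSpace.norm_single]
    simp [abs_of_pos hr.1]
  have hxb : x ∈ Metric.ball (0 : EuclideanSpace ℝ (Fin n)) R := by
    rw [mem_ball_zero_iff, hxn]; exact hr.2
  have := hpde x hxb
  rw [hxn] at this
  rw [← this, hxdef]
  exact (lap_radial hn hf hr.1).symm
end
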